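/- Let U ⊆ ℂ be open with (x+1)·x·(x²+3x+3) ≠ 0 and (x+1)³ ≠ 1 for all x ∈ U, and define s(x) := 1 − 2/(x+1)³. Let V ⊆ ℂ be open with s(U) ⊆ V, and let Y : ℂ → ℂ be twice differentiable on V satisfying Legendre's equation with ν = −1/3, μ = 0: (1 − s²)·Y''(s) − 2s·Y'(s) − (2/9)·Y(s) = 0 for all s ∈ V. Let g : ℂ → ℂ be twice differentiable on U with g(x)² = (x+1)³ − 1 for all x ∈ U. Then ψ(x) := (g(x)/(x+1))·Y(s(x)) solves ψ'' = Q₂·ψ on U. -/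

import Mathlib

open Complex

/-- `f` solves the equation `ψ'' = Q·ψ` on the open set `U`. -/
def SolvesOn (Q f : ℂ → ℂ) (U : Set ℂ) : Prop :=
  (∀ x ∈ U, DifferentiableAt ℂ f x) ∧ (∀ x ∈ U, DifferentiableAt ℂ (deriv f) x) ∧
    ∀ x ∈ U, deriv (deriv f) x = Q x * f x

/-- The coefficient of the normal form (2') of the second Chudnovsky equation. -/
noncomputable def Q₂ (x : ℂ) : ℂ :=
  -(1 / 4) * ((x + 1) * (x + 3) * (x ^ 2 + 3)) / (x ^ 2 * (x ^ 2 + 3 * x + 3) ^ 2)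

private lemma hasDerivAt_s (x : ℂ) (hw : x + 1 ≠ 0) :
    HasDerivAt (fun x : ℂ => 1 - 2 / (x + 1) ^ 3) (6 / (x + 1) ^ 4) x := by
  have h1 : HasDerivAt (fun x : ℂ => (x + 1) ^ 3) (3 * (x + 1) ^ 2) x := by
    have := (hasDerivAt_id' (𝕜 := ℂ) x).add_const 1 |>.pow 3
    refine this.congr_deriv ?_
    push_cast
    ring
  have h2 := (hasDerivAt_const x (2 : ℂ)).div h1 (pow_ne_zero 3 hw)
  have h3 := h2.const_sub 1
  refine h3.congr_deriv ?_
  field_simp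
  ring

set_option maxHeartbeats 4000000 in
theorem chudnovsky_two_legendre_integrability
    (U V : Set ℂ) (hU : IsOpen U) (hV : IsOpen V)
    (hUne : ∀ x ∈ U, (x + 1) * x * (x ^ 2 + 3 * x + 3) ≠ 0)
    (hUne' : ∀ x ∈ U, (x + 1) ^ 3 ≠ 1)
    (hsV : ∀ x ∈ U, 1 - 2 / (x + 1) ^ 3 ∈ V)
    (Y g : ℂ → ℂ)
    (hY1 : ∀ s ∈ V, DifferentiableAt ℂ Y s)
    (hY2 : ∀ s ∈ V, DifferentiableAt ℂ (deriv Y) s)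
    (hYode : ∀ s ∈ V, (1 - s ^ 2) * deriv (deriv Y) s - 2 * s * deriv Y s
      - (2 / 9) * Y s = 0)
    (hg1 : ∀ x ∈ U, DifferentiableAt ℂ g x)
    (hg2 : ∀ x ∈ U, DifferentiableAt ℂ (deriv g) x)
    (hgsq : ∀ x ∈ U, g x ^ 2 = (x + 1) ^ 3 - 1) :
    SolvesOn Q₂ (fun x => g x / (x + 1) * Y (1 - 2 / (x + 1) ^ 3)) U := by
  -- basic nonvanishing facts
  have hwx : ∀ x ∈ U, x + 1 ≠ 0 := by
    intro x hx
    have h := hUne x hx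
    exact fun h0 => h (by rw [h0]; ring)
  have hx0 : ∀ x ∈ U, x ≠ 0 := by
    intro x hx
    have h := hUne x hx
    exact fun h0 => h (by rw [h0]; ring)
  have hq0 : ∀ x ∈ U, x ^ 2 + 3 * x + 3 ≠ 0 := by
    intro x hx
    have h := hUne x hx
    exact fun h0 => h (by rw [h0]; ring)
  have hg0 : ∀ x ∈ U, g x ≠ 0 := by
    intro x hx
    intro h0
    have h := hgsq x hx
    rw [h0] at h
    exact hUne' x hx (by linear_combination -h)
  -- first derivative
  set F1 : ℂ → ℂ := fun x =>
    (deriv g x * (x + 1) - g x) / (x + 1) ^ 2 * Y (1 - 2 / (x + 1) ^ 3)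
      + g x / (x + 1) * (deriv Y (1 - 2 / (x + 1) ^ 3) * (6 / (x + 1) ^ 4)) with hF1def
  have hYc : ∀ x ∈ U, HasDerivAt (fun x => Y (1 - 2 / (x + 1) ^ 3))
      (deriv Y (1 - 2 / (x + 1) ^ 3) * (6 / (x + 1) ^ 4)) x := by
    intro x hx
    exact ((hY1 _ (hsV x hx)).hasDerivAt).comp x (hasDerivAt_s x (hwx x hx))
  have hY2c : ∀ x ∈ U, HasDerivAt (fun x => deriv Y (1 - 2 / (x + 1) ^ 3))
      (deriv (deriv Y) (1 - 2 / (x + 1) ^ 3) * (6 / (x + 1) ^ 4)) x := by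
    intro x hx
    exact ((hY2 _ (hsV x hx)).hasDerivAt).comp x (hasDerivAt_s x (hwx x hx))
  have hu : ∀ x ∈ U, HasDerivAt (fun x => g x / (x + 1))
      ((deriv g x * (x + 1) - g x) / (x + 1) ^ 2) x := by
    intro x hx
    have := (hg1 x hx).hasDerivAt.div ((hasDerivAt_id' x).add_const 1) (hwx x hx)
    exact this.congr_deriv (by ring)
  have hF1 : ∀ x ∈ U,
      HasDerivAt (fun x => g x / (x + 1) * Y (1 - 2 / (x + 1) ^ 3)) (F1 x) x := by
    intro x hx
    exact (hu x hx).mul (hYc x hx)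
  have hEq : ∀ x ∈ U, deriv (fun x => g x / (x + 1) * Y (1 - 2 / (x + 1) ^ 3)) =ᶠ[nhds x] F1 := by
    intro x hx
    filter_upwards [hU.mem_nhds hx] with y hy
    exact (hF1 y hy).deriv
  -- second derivative of F1
  set E : ℂ → ℂ := fun x =>
    ((deriv (deriv g) x * (x + 1) ^ 2 - 2 * deriv g x * (x + 1) + 2 * g x)
        * Y (1 - 2 / (x + 1) ^ 3) * (x + 1) ^ 6
      + 12 * (deriv g x * (x + 1) - g x) * deriv Y (1 - 2 / (x + 1) ^ 3) * (x + 1) ^ 3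
      + 36 * g x * deriv (deriv Y) (1 - 2 / (x + 1) ^ 3)
      - 24 * g x * deriv Y (1 - 2 / (x + 1) ^ 3) * (x + 1) ^ 3) / (x + 1) ^ 9 with hEdef
  have hE : ∀ x ∈ U, HasDerivAt F1 (E x) x := by
    intro x hx
    have hw := hwx x hx
    have hN : HasDerivAt (fun x => deriv g x * (x + 1) - g x)
        (deriv (deriv g) x * (x + 1)) x := by
      have := ((hg2 x hx).hasDerivAt.mul ((hasDerivAt_id' x).add_const 1)).sub
        (hg1 x hx).hasDerivAt
      refine this.congr_deriv ?_
      ring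
    have hden2 : HasDerivAt (fun x : ℂ => (x + 1) ^ 2) (2 * (x + 1)) x := by
      have := ((hasDerivAt_id' (𝕜 := ℂ) x).add_const 1).pow 2
      refine this.congr_deriv ?_
      push_cast
      ring
    have hden4 : HasDerivAt (fun x : ℂ => (x + 1) ^ 4) (4 * (x + 1) ^ 3) x := by
      have := ((hasDerivAt_id' (𝕜 := ℂ) x).add_const 1).pow 4
      refine this.congr_deriv ?_
      push_cast
      ring
    have hA : HasDerivAt (fun x => (deriv g x * (x + 1) - g x) / (x + 1) ^ 2)
        ((deriv (deriv g) x * (x + 1) * (x + 1) ^ 2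
          - (deriv g x * (x + 1) - g x) * (2 * (x + 1))) / ((x + 1) ^ 2) ^ 2) x :=
      hN.div hden2 (pow_ne_zero 2 hw)
    have hr : HasDerivAt (fun x : ℂ => 6 / (x + 1) ^ 4) (-24 / (x + 1) ^ 5) x := by
      have := (hasDerivAt_const x (6 : ℂ)).div hden4 (pow_ne_zero 4 hw)
      refine this.congr_deriv ?_
      field_simp
      ring
    have hD : HasDerivAt (fun x => deriv Y (1 - 2 / (x + 1) ^ 3) * (6 / (x + 1) ^ 4))
        (deriv (deriv Y) (1 - 2 / (x + 1) ^ 3) * (6 / (x + 1) ^ 4) * (6 / (x + 1) ^ 4)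
          + deriv Y (1 - 2 / (x + 1) ^ 3) * (-24 / (x + 1) ^ 5)) x :=
      (hY2c x hx).mul hr
    have htot := (hA.mul (hYc x hx)).add ((hu x hx).mul hD)
    refine htot.congr_deriv ?_
    simp only [hEdef]
    generalize deriv (deriv Y) (1 - 2 / (x + 1) ^ 3) = B2'
    generalize deriv Y (1 - 2 / (x + 1) ^ 3) = B1'
    generalize Y (1 - 2 / (x + 1) ^ 3) = B'
    field_simp [hw]
    ring
  refine ⟨fun x hx => (hF1 x hx).differentiableAt, ?_, ?_⟩
  · intro x hx
    exact ((hEq x hx).differentiableAt_iff).mpr (hE x hx).differentiableAt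
  · intro x hx
    rw [(hEq x hx).deriv_eq, (hE x hx).deriv]
    -- now pure algebra
    have hw := hwx x hx
    have hx' := hx0 x hx
    have hq := hq0 x hx
    have hg0x := hg0 x hx
    have hR0 : g x ^ 2 = (x + 1) ^ 3 - 1 := hgsq x hx
    -- first derived relation: 2 g g' = 3 (x+1)^2
    have hR1 : ∀ y ∈ U, 2 * g y * deriv g y = 3 * (y + 1) ^ 2 := by
      intro y hy
      have e1 : (fun z => g z ^ 2) =ᶠ[nhds y] (fun z => (z + 1) ^ 3 - 1) := by
        filter_upwards [hU.mem_nhds hy] with z hz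
        exact hgsq z hz
      have hL : HasDerivAt (fun z => g z ^ 2) (2 * g y * deriv g y) y := by
        have := (hg1 y hy).hasDerivAt.pow 2
        refine this.congr_deriv ?_
        push_cast
        ring
      have hRd : HasDerivAt (fun z : ℂ => (z + 1) ^ 3 - 1) (3 * (y + 1) ^ 2) y := by
        have := (((hasDerivAt_id' (𝕜 := ℂ) y).add_const 1).pow 3).sub_const 1
        refine this.congr_deriv ?_
        push_cast
        ring
      calc 2 * g y * deriv g y = deriv (fun z => g z ^ 2) y := (hL.deriv).symm
        _ = deriv (fun z : ℂ => (z + 1) ^ 3 - 1) y := e1.deriv_eq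
        _ = 3 * (y + 1) ^ 2 := hRd.deriv
    -- second derived relation
    have hR2 : 2 * deriv g x * deriv g x + 2 * g x * deriv (deriv g) x = 6 * (x + 1) := by
      have e1 : (fun z => 2 * g z * deriv g z) =ᶠ[nhds x] (fun z : ℂ => 3 * (z + 1) ^ 2) := by
        filter_upwards [hU.mem_nhds hx] with z hz
        exact hR1 z hz
      have hL : HasDerivAt (fun z => 2 * g z * deriv g z)
          (2 * deriv g x * deriv g x + 2 * g x * deriv (deriv g) x) x := by
        exact (((hg1 x hx).hasDerivAt.const_mul (2 : ℂ)).mul (hg2 x hx).hasDerivAt)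
      have hRd : HasDerivAt (fun z : ℂ => 3 * (z + 1) ^ 2) (6 * (x + 1)) x := by
        have := (((hasDerivAt_id' (𝕜 := ℂ) x).add_const 1).pow 2).const_mul (3 : ℂ)
        refine this.congr_deriv ?_
        push_cast
        ring
      calc 2 * deriv g x * deriv g x + 2 * g x * deriv (deriv g) x
          = deriv (fun z => 2 * g z * deriv g z) x := hL.deriv.symm
        _ = deriv (fun z : ℂ => 3 * (z + 1) ^ 2) x := e1.deriv_eq
        _ = 6 * (x + 1) := hRd.deriv
    have hode := hYode _ (hsV x hx)
    rw [hEdef]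
    simp only [Q₂]
    set B2 := deriv (deriv Y) (1 - 2 / (x + 1) ^ 3) with hB2def
    set B1 := deriv Y (1 - 2 / (x + 1) ^ 3) with hB1def
    set B := Y (1 - 2 / (x + 1) ^ 3) with hBdef
    set a2 := deriv (deriv g) x with ha2def
    set a1 := deriv g x with ha1def
    set t := g x with htdef
    -- solve for the second derivatives
    have hss : 1 - (1 - 2 / (x + 1) ^ 3) ^ 2 ≠ 0 := by
      have h1 : 1 - (1 - 2 / (x + 1) ^ 3) ^ 2 = 4 * ((x + 1) ^ 3 - 1) / ((x + 1) ^ 3) ^ 2 := by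
        field_simp
        ring
      rw [h1]
      apply div_ne_zero
      · exact mul_ne_zero (by norm_num) (sub_ne_zero.mpr (hUne' x hx))
      · exact pow_ne_zero 2 (pow_ne_zero 3 hw)
    field_simp [hwx x hx] at hode
    have hB2v : B2 = (9 * ((x + 1) ^ 3 - 2) * (x + 1) ^ 3 * B1 + (x + 1) ^ 6 * B)
        / (18 * t ^ 2) := by
      rw [eq_div_iff (mul_ne_zero (by norm_num) (pow_ne_zero 2 hg0x))]
      apply mul_left_cancel₀ (a := 2 * (x + 1) ^ 3)
        (mul_ne_zero two_ne_zero (pow_ne_zero 3 (hwx x hx)))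
      linear_combination (x + 1) ^ 3 * hode + 36 * (x + 1) ^ 3 * B2 * hR0
    have ha1v : a1 = 3 * (x + 1) ^ 2 / (2 * t) := by
      rw [eq_div_iff (mul_ne_zero two_ne_zero hg0x)]
      linear_combination hR1 x hx
    have ha2v : a2 = (3 * (x + 1) - a1 ^ 2) / t := by
      rw [eq_div_iff hg0x]
      linear_combination hR2 / 2
    have hR1x := hR1 x hx
    have H : B2 * (18 * t ^ 2) = 9 * ((x + 1) ^ 3 - 2) * (x + 1) ^ 3 * B1 + (x + 1) ^ 6 * B := by
      rw [hB2v, div_mul_cancel₀ _ (mul_ne_zero (by norm_num) (pow_ne_zero 2 hg0x))]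
    have hs : t ^ 2 = (x * (x ^ 2 + 3 * x + 3)) := by linear_combination hR0
    have main : 4 * t ^ 2 * (t * ((a2 * (x + 1) ^ 2 - 2 * a1 * (x + 1) + 2 * t) * B * (x + 1) ^ 6 + 12 * (a1 * (x + 1) - t) * B1 * (x + 1) ^ 3 + 36 * t * B2 - 24 * t * B1 * (x + 1) ^ 3)) = (x + 1) ^ 6 * B * (8 * t ^ 2 * (x + 1) ^ 3 - 9 * (x + 1) ^ 6) := by
      linear_combination 2 * t ^ 2 * (x + 1) ^ 8 * B * hR2 - ((x + 1) ^ 8 * B * (2 * t * a1 + 3 * (x + 1) ^ 2) + 4 * t ^ 2 * (x + 1) ^ 7 * B - 24 * t ^ 2 * (x + 1) ^ 4 * B1) * hR1x + 8 * t ^ 2 * H + (8 * t ^ 2 * (x + 1) ^ 6 * B - 144 * t ^ 2 * (x + 1) ^ 3 * B1) * hR0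
    have C : ((a2 * (x + 1) ^ 2 - 2 * a1 * (x + 1) + 2 * t) * B * (x + 1) ^ 6 + 12 * (a1 * (x + 1) - t) * B1 * (x + 1) ^ 3 + 36 * t * B2 - 24 * t * B1 * (x + 1) ^ 3) * (4 * x ^ 2 * (x ^ 2 + 3 * x + 3) ^ 2) = -((x + 1) * (x + 3) * (x ^ 2 + 3)) * t * B * (x + 1) ^ 8 := by
      apply mul_left_cancel₀ hg0x
      linear_combination (x * (x ^ 2 + 3 * x + 3)) * main + (-4 * t * ((a2 * (x + 1) ^ 2 - 2 * a1 * (x + 1) + 2 * t) * B * (x + 1) ^ 6 + 12 * (a1 * (x + 1) - t) * B1 * (x + 1) ^ 3 + 36 * t * B2 - 24 * t * B1 * (x + 1) ^ 3) * (x * (x ^ 2 + 3 * x + 3)) + ((x + 1) * (x + 3) * (x ^ 2 + 3)) * B * (x + 1) ^ 8 + 8 * (x * (x ^ 2 + 3 * x + 3)) * (x + 1) ^ 9 * B) * hs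
    have hN : ((a2 * (x + 1) ^ 2 - 2 * a1 * (x + 1) + 2 * t) * B * (x + 1) ^ 6 + 12 * (a1 * (x + 1) - t) * B1 * (x + 1) ^ 3 + 36 * t * B2 - 24 * t * B1 * (x + 1) ^ 3) = -((x + 1) * (x + 3) * (x ^ 2 + 3)) * t * B * (x + 1) ^ 8 / (4 * x ^ 2 * (x ^ 2 + 3 * x + 3) ^ 2) := by
      rw [eq_div_iff (mul_ne_zero (mul_ne_zero (by norm_num : (4 : ℂ) ≠ 0) (pow_ne_zero 2 hx')) (pow_ne_zero 2 hq))]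
      exact C
    rw [hN]
    field_simp
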